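/- Stronger good news raises surplus: let E = ({l,h}, p_L, p_H) and E' = ({l',h'}, p'_L, p'_H) be binary experiments such that the bad-news likelihood ratios coincide, p'_H(l')·p_L(l) = p_H(l)·p'_L(l), and E' delivers weakly stronger good news, p'_H(h')·p_L(h) ≥ p_H(h)·p'_L(h). Then total surplus in the most selective equilibrium under E' weakly exceeds that under E (Π'(σ̂') ≥ Π(σ̂) for most selective equilibrium strategies σ̂' of E' and σ̂ of E), and likewise total surplus in the least selective equilibrium under E' weakly exceeds that under E. -/

import Mathlib

open Finset Filter Topology

noncomputable section

/-- Probability that a single buyer rejects the seller, given conditional signal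
distribution `p` and strategy `σ`: `r_θ(σ) = 1 - Σ_s p_θ(s)·σ(s)`. -/
def rej {m : ℕ} (p σ : Fin m → ℝ) : ℝ := 1 - ∑ s, p s * σ s

/-- `ν_θ(σ) = (1/n)·Σ_{k=0}^{n-1} r_θ(σ)^k`: probability of being visited. -/
def visit (n : ℕ) {m : ℕ} (p σ : Fin m → ℝ) : ℝ :=
  (1 / (n : ℝ)) * ∑ k ∈ Finset.range n, rej p σ ^ k

/-- Interim belief `Ψ(σ) = ρ·ν_H(σ) / (ρ·ν_H(σ) + (1-ρ)·ν_L(σ))`. -/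
def interim (ρ : ℝ) (n : ℕ) {m : ℕ} (pL pH σ : Fin m → ℝ) : ℝ :=
  ρ * visit n pH σ / (ρ * visit n pH σ + (1 - ρ) * visit n pL σ)

/-- Posterior belief `Q_ψ(s) = ψ·p_H(s) / (ψ·p_H(s) + (1-ψ)·p_L(s))`. -/
def post {m : ℕ} (ψ : ℝ) (pL pH : Fin m → ℝ) (s : Fin m) : ℝ :=
  ψ * pH s / (ψ * pH s + (1 - ψ) * pL s)

/-- A strategy maps each signal to an acceptance probability in `[0,1]`. -/
def IsStrategy {m : ℕ} (σ : Fin m → ℝ) : Prop := ∀ s, 0 ≤ σ s ∧ σ s ≤ 1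

/-- `σ` is an equilibrium strategy: with `ψ* = Ψ(σ)`, accept for sure when the
posterior exceeds `c`, reject for sure when it falls below `c`. -/
def IsEquilibrium (ρ c : ℝ) (n : ℕ) {m : ℕ} (pL pH σ : Fin m → ℝ) : Prop :=
  IsStrategy σ ∧
  ∀ s : Fin m,
    (c < post (interim ρ n pL pH σ) pL pH s → σ s = 1) ∧
    (post (interim ρ n pL pH σ) pL pH s < c → σ s = 0)

/-- Total surplus `Π(σ) = (1-c)·ρ·(1-r_H(σ)^n) - c·(1-ρ)·(1-r_L(σ)^n)`. -/
def surplus (ρ c : ℝ) (n : ℕ) {m : ℕ} (pL pH σ : Fin m → ℝ) : ℝ :=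
  (1 - c) * ρ * (1 - rej pH σ ^ n) - c * (1 - ρ) * (1 - rej pL σ ^ n)

/-- The most selective equilibrium strategy. -/
def MostSelective (ρ c : ℝ) (n : ℕ) {m : ℕ} (pL pH σ : Fin m → ℝ) : Prop :=
  IsEquilibrium ρ c n pL pH σ ∧
  ∀ σ' : Fin m → ℝ, IsEquilibrium ρ c n pL pH σ' → ∀ s, σ s ≤ σ' s

/-- The least selective equilibrium strategy. -/
def LeastSelective (ρ c : ℝ) (n : ℕ) {m : ℕ} (pL pH σ : Fin m → ℝ) : Prop :=
  IsEquilibrium ρ c n pL pH σ ∧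
  ∀ σ' : Fin m → ℝ, IsEquilibrium ρ c n pL pH σ' → ∀ s, σ' s ≤ σ s

/-- An experiment: `p_L, p_H` are probability mass functions with full joint support,
indexed so that likelihood ratios are nondecreasing. -/
def IsExperiment {m : ℕ} (pL pH : Fin m → ℝ) : Prop :=
  (∀ s, 0 ≤ pL s) ∧ (∀ s, 0 ≤ pH s) ∧
  (∑ s, pL s = 1) ∧ (∑ s, pH s = 1) ∧
  (∀ s, 0 < pL s + pH s) ∧
  (∀ i j : Fin m, i ≤ j → pH i * pL j ≤ pH j * pL i)

/-- A strategy is monotone: a positive acceptance probability at `s_i` forces sure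
acceptance at every signal with strictly higher likelihood ratio. -/
def MonotoneStrategy {m : ℕ} (pL pH σ : Fin m → ℝ) : Prop :=
  ∀ i j : Fin m, 0 < σ i → pH i * pL j < pH j * pL i → σ j = 1

namespace SGN

def G (n : ℕ) (r : ℝ) : ℝ := ∑ k ∈ Finset.range n, r ^ k
def rLf (u a b : ℝ) : ℝ := 1 - (u * a + (1 - u) * b)
def rHf (u lam a b : ℝ) : ℝ := 1 - (lam * u * a + (1 - lam * u) * b)
def WL (A B : ℝ) (n : ℕ) (u lam a b : ℝ) : ℝ :=
  A * (lam * u) * G n (rHf u lam a b) - B * u * G n (rLf u a b)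
def WH (A B : ℝ) (n : ℕ) (u lam a b : ℝ) : ℝ :=
  A * (1 - lam * u) * G n (rHf u lam a b) - B * (1 - u) * G n (rLf u a b)
def Pif (A B : ℝ) (n : ℕ) (u lam a b : ℝ) : ℝ :=
  A * (1 - (rHf u lam a b) ^ n) - B * (1 - (rLf u a b) ^ n)
def mf (A B : ℝ) (n : ℕ) (lam v : ℝ) : ℝ := A * lam * G n (lam * v) - B * G n v
def Phif (A B : ℝ) (n : ℕ) (lam v : ℝ) : ℝ := A * (1 - (lam * v) ^ n) - B * (1 - v ^ n)

def REq (A B : ℝ) (n : ℕ) (u lam a b : ℝ) : Prop :=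
  0 ≤ a ∧ a ≤ 1 ∧ 0 ≤ b ∧ b ≤ 1 ∧
  (0 < WL A B n u lam a b → a = 1) ∧ (WL A B n u lam a b < 0 → a = 0) ∧
  (0 < WH A B n u lam a b → b = 1) ∧ (WH A B n u lam a b < 0 → b = 0)

lemma G_ge_one {n : ℕ} (hn : 1 ≤ n) {r : ℝ} (hr : 0 ≤ r) : 1 ≤ G n r := by
  have h0 : (0:ℕ) ∈ Finset.range n := Finset.mem_range.mpr hn
  have := Finset.single_le_sum (f := fun k => r ^ k) (fun k _ => pow_nonneg hr k) h0
  simpa [G] using this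

lemma G_pos {n : ℕ} (hn : 1 ≤ n) {r : ℝ} (hr : 0 ≤ r) : 0 < G n r :=
  lt_of_lt_of_le one_pos (G_ge_one hn hr)

lemma G_nonneg {n : ℕ} {r : ℝ} (hr : 0 ≤ r) : 0 ≤ G n r :=
  Finset.sum_nonneg fun k _ => pow_nonneg hr k

lemma G_geom {n : ℕ} (r : ℝ) : (1 - r) * G n r = 1 - r ^ n := by
  have := geom_sum_mul r n
  unfold G
  nlinarith [this]

lemma G_mono {n : ℕ} {r s : ℝ} (hr : 0 ≤ r) (hrs : r ≤ s) : G n r ≤ G n s :=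
  Finset.sum_le_sum fun k _ => pow_le_pow_left₀ hr hrs k

lemma G_zero {n : ℕ} (hn : 1 ≤ n) : G n (0:ℝ) = 1 := by
  unfold G
  rw [Finset.sum_eq_single 0]
  · simp
  · intro k _ hk; exact zero_pow hk
  · intro h; exact absurd (Finset.mem_range.mpr hn) h

lemma G_one (n : ℕ) : G n (1:ℝ) = n := by simp [G]

lemma G_lam_le {n : ℕ} (hn : 1 ≤ n) {lam v : ℝ} (hl0 : 0 ≤ lam) (hl1 : lam ≤ 1)
    (hv : 0 ≤ v) : lam ^ (n-1) * G n v ≤ G n (lam * v) := by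
  unfold G
  rw [Finset.mul_sum]
  refine Finset.sum_le_sum fun k hk => ?_
  rw [mul_pow]
  have hk' : k ≤ n - 1 := Nat.le_sub_one_of_lt (Finset.mem_range.mp hk)
  exact mul_le_mul_of_nonneg_right (pow_le_pow_of_le_one hl0 hl1 hk') (pow_nonneg hv k)


section basic
variable {A B : ℝ} {n : ℕ} {u lam a b : ℝ}

lemma rL_mem (hu0 : 0 ≤ u) (hu1 : u ≤ 1) (ha0 : 0 ≤ a) (ha1 : a ≤ 1)
    (hb0 : 0 ≤ b) (hb1 : b ≤ 1) : 0 ≤ rLf u a b ∧ rLf u a b ≤ 1 := by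
  unfold rLf; constructor <;> nlinarith

lemma rH_mem (hu0 : 0 ≤ u) (hu1 : u ≤ 1) (hl0 : 0 ≤ lam) (hl1 : lam ≤ 1)
    (ha0 : 0 ≤ a) (ha1 : a ≤ 1) (hb0 : 0 ≤ b) (hb1 : b ≤ 1) :
    0 ≤ rHf u lam a b ∧ rHf u lam a b ≤ 1 := by
  unfold rHf
  have h1 : 0 ≤ lam * u := mul_nonneg hl0 hu0
  have h2 : lam * u ≤ 1 := by nlinarith
  constructor <;> nlinarith

/-- Π = a·WL + b·WH -/
lemma Pi_decomp : Pif A B n u lam a b = a * WL A B n u lam a b + b * WH A B n u lam a b := by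
  unfold Pif WL WH
  have h1 : (1 - rHf u lam a b) * G n (rHf u lam a b) = 1 - (rHf u lam a b) ^ n := G_geom _
  have h2 : (1 - rLf u a b) * G n (rLf u a b) = 1 - (rLf u a b) ^ n := G_geom _
  have e1 : 1 - rHf u lam a b = lam * u * a + (1 - lam * u) * b := by unfold rHf; ring
  have e2 : 1 - rLf u a b = u * a + (1 - u) * b := by unfold rLf; ring
  rw [← h1, ← h2, e1, e2]; ring

/-- equilibrium surplus is nonnegative -/
lemma Pi_nonneg (h : REq A B n u lam a b) : 0 ≤ Pif A B n u lam a b := by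
  obtain ⟨ha0, _, hb0, _, hWL1, hWL0, hWH1, hWH0⟩ := h
  rw [Pi_decomp]
  have t1 : 0 ≤ a * WL A B n u lam a b := by
    rcases lt_trichotomy (WL A B n u lam a b) 0 with h | h | h
    · rw [hWL0 h]; simp
    · rw [h]; simp
    · have ha := hWL1 h; subst ha; linarith
  have t2 : 0 ≤ b * WH A B n u lam a b := by
    rcases lt_trichotomy (WH A B n u lam a b) 0 with h | h | h
    · rw [hWH0 h]; simp
    · rw [h]; simp
    · have hbq := hWH1 h; subst hbq; linarith
  linarith

end basic

section signs
variable {A B : ℝ} {n : ℕ} {u lam a b : ℝ}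

/-- SL1: WL ≥ 0 implies WH > 0 (nondegenerate λ<1). -/
lemma SL1 (hA : 0 < A) (hB : 0 < B) (hn : 1 ≤ n) (hu0 : 0 < u) (hu1 : u ≤ 1)
    (hl0 : 0 ≤ lam) (hl1 : lam < 1) (ha0 : 0 ≤ a) (ha1 : a ≤ 1) (hb0 : 0 ≤ b) (hb1 : b ≤ 1)
    (hWL : 0 ≤ WL A B n u lam a b) : 0 < WH A B n u lam a b := by
  have hrH := rH_mem hu0.le hu1 hl0 hl1.le ha0 ha1 hb0 hb1
  have hrL := rL_mem hu0.le hu1 ha0 ha1 hb0 hb1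
  set Gh := G n (rHf u lam a b) with hGH
  set Gl := G n (rLf u a b) with hGL
  have hGH1 : 1 ≤ Gh := G_ge_one hn hrH.1
  have hGL0 : 0 ≤ Gl := G_nonneg hrL.1
  unfold WL at hWL
  unfold WH
  have key : B * Gl ≤ A * lam * Gh := by
    have : u * (B * Gl) ≤ u * (A * lam * Gh) := by nlinarith
    exact le_of_mul_le_mul_left this hu0
  nlinarith [mul_le_mul_of_nonneg_left key (by linarith : (0:ℝ) ≤ 1 - u),
    mul_pos (mul_pos hA (by linarith : (0:ℝ) < Gh)) (by linarith : (0:ℝ) < 1 - lam)]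

/-- SL2: WH ≤ 0 implies WL < 0 (nondegenerate λ<1). -/
lemma SL2 (hA : 0 < A) (hB : 0 < B) (hn : 1 ≤ n) (hu0 : 0 < u) (hu1 : u ≤ 1)
    (hl0 : 0 ≤ lam) (hl1 : lam < 1) (ha0 : 0 ≤ a) (ha1 : a ≤ 1) (hb0 : 0 ≤ b) (hb1 : b ≤ 1)
    (hWH : WH A B n u lam a b ≤ 0) : WL A B n u lam a b < 0 := by
  have hrH := rH_mem hu0.le hu1 hl0 hl1.le ha0 ha1 hb0 hb1
  have hrL := rL_mem hu0.le hu1 ha0 ha1 hb0 hb1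
  have hGH1 : 1 ≤ G n (rHf u lam a b) := G_ge_one hn hrH.1
  have hGL0 : 0 ≤ G n (rLf u a b) := G_nonneg hrL.1
  set Gh := G n (rHf u lam a b) with hGHd
  set Gl := G n (rLf u a b) with hGLd
  unfold WH at hWH
  unfold WL
  rcases eq_or_lt_of_le hu1 with hu | hu
  · exfalso
    rw [← hu] at hWH
    nlinarith [mul_pos (mul_pos hA hu0) (by linarith : (0:ℝ) < 1 - lam)]
  · have key : A * (1 - lam * u) * Gh ≤ B * (1 - u) * Gl := by linarith
    have k2 : u * (A * (1 - lam * u) * Gh) ≤ u * (B * (1 - u) * Gl) :=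
      mul_le_mul_of_nonneg_left key hu0.le
    have k3 : 0 < u * A * Gh * (1 - lam) := by
      have : (0:ℝ) < Gh := by linarith
      have h1l : (0:ℝ) < 1 - lam := by linarith
      positivity
    have h2 : (1 - u) * (A * (lam * u) * Gh - B * u * Gl) < 0 := by nlinarith
    nlinarith [h2, mul_pos hu0 (by linarith : (0:ℝ) < 1 - u)]

end signs

section values
variable {A B : ℝ} {n : ℕ} {u lam a v : ℝ}

lemma WL_at_one : WL A B n u lam a 1 = u * mf A B n lam (u * (1 - a)) := by
  unfold WL mf
  have e1 : rHf u lam a 1 = lam * (u * (1 - a)) := by unfold rHf; ring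
  have e2 : rLf u a 1 = u * (1 - a) := by unfold rLf; ring
  rw [e1, e2]; ring

lemma Pi_at_one : Pif A B n u lam a 1 = Phif A B n lam (u * (1 - a)) := by
  unfold Pif Phif
  have e1 : rHf u lam a 1 = lam * (u * (1 - a)) := by unfold rHf; ring
  have e2 : rLf u a 1 = u * (1 - a) := by unfold rLf; ring
  rw [e1, e2]

lemma WH_at_01 : WH A B n u lam 0 1 = Phif A B n lam u := by
  have h := Pi_decomp (A := A) (B := B) (n := n) (u := u) (lam := lam) (a := 0) (b := 1)
  have h2 := Pi_at_one (A := A) (B := B) (n := n) (u := u) (lam := lam) (a := 0)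
  rw [h2] at h
  have : u * (1 - 0) = u := by ring
  rw [this] at h
  linarith

lemma mf_nonpos_bound (hA : 0 < A) (hn : 1 ≤ n) (hl0 : 0 ≤ lam) (hl1 : lam ≤ 1)
    (hv : 0 ≤ v) (hm : mf A B n lam v ≤ 0) : A * lam ^ n ≤ B := by
  have h1 := G_lam_le hn hl0 hl1 hv (n := n)
  have hGv : 1 ≤ G n v := G_ge_one hn hv
  unfold mf at hm
  obtain ⟨m, rfl⟩ : ∃ m, n = m + 1 := ⟨n - 1, (Nat.succ_pred_eq_of_pos hn).symm⟩
  have hpow : lam * lam ^ (m + 1 - 1) = lam ^ (m + 1) := by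
    simp [pow_succ]; ring
  have h2 : A * lam ^ (m+1) * G (m+1) v ≤ A * lam * G (m+1) (lam * v) := by
    have := mul_le_mul_of_nonneg_left h1 (mul_nonneg hA.le hl0)
    calc A * lam ^ (m+1) * G (m+1) v = (A * lam) * (lam ^ (m + 1 - 1) * G (m+1) v) := by
          rw [← hpow]; ring
      _ ≤ (A * lam) * G (m+1) (lam * v) := this
      _ = A * lam * G (m+1) (lam * v) := by ring
  have h3 : A * lam ^ (m+1) * G (m+1) v ≤ B * G (m+1) v := by linarith
  have hl : 0 ≤ lam ^ (m+1) := pow_nonneg hl0 _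
  nlinarith

lemma mf_neg (hA : 0 < A) (hn : 1 ≤ n) (hl0 : 0 ≤ lam) (hl1 : lam ≤ 1)
    (hAB : A * lam < B) (hv : 0 ≤ v) : mf A B n lam v < 0 := by
  unfold mf
  have h1 : G n (lam * v) ≤ G n v := G_mono (mul_nonneg hl0 hv) (by nlinarith)
  have hGv : 1 ≤ G n v := G_ge_one hn hv
  nlinarith [mul_nonneg hA.le hl0]

lemma Phif_mono (hAB : A * lam ^ n ≤ B) (hv : 0 ≤ v) {v' : ℝ} (hvv' : v ≤ v') :
    Phif A B n lam v ≤ Phif A B n lam v' := by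
  unfold Phif
  rw [mul_pow, mul_pow]
  nlinarith [pow_le_pow_left₀ hv hvv' n]

lemma mf_cont : Continuous (mf A B n lam) := by
  unfold mf
  apply Continuous.sub
  · exact continuous_const.mul (continuous_finset_sum _ fun k _ =>
      (continuous_const.mul continuous_id).pow k)
  · exact continuous_const.mul (continuous_finset_sum _ fun k _ =>
      continuous_id.pow k)

end values

/-- continuity of the WH function along the (0,x) segment -/
lemma WH_cont {A B : ℝ} {n : ℕ} {u lam : ℝ} :
    Continuous (fun x : ℝ => WH A B n u lam 0 x) := by
  have h1 : Continuous (fun x : ℝ => rHf u lam 0 x) := by unfold rHf; fun_prop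
  have h2 : Continuous (fun x : ℝ => rLf u 0 x) := by unfold rLf; fun_prop
  have g1 : Continuous (fun x : ℝ => G n (rHf u lam 0 x)) := by
    unfold G; exact continuous_finset_sum _ fun k _ => h1.pow k
  have g2 : Continuous (fun x : ℝ => G n (rLf u 0 x)) := by
    unfold G; exact continuous_finset_sum _ fun k _ => h2.pow k
  unfold WH; exact (continuous_const.mul g1).sub (continuous_const.mul g2)

lemma WH_at_00 {A B : ℝ} {n : ℕ} {u lam : ℝ} :
    WH A B n u lam 0 0 = (A * (1 - lam * u) - B * (1 - u)) * (n : ℝ) := by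
  have e1 : rHf u lam 0 0 = 1 := by unfold rHf; ring
  have e2 : rLf u 0 0 = 1 := by unfold rLf; ring
  unfold WH; rw [e1, e2, G_one]; ring

set_option maxHeartbeats 2000000 in
theorem R_MOST {A B : ℝ} {n : ℕ} {u u' lam a b a' b' : ℝ}
    (hA : 0 < A) (hB : 0 < B) (hn : 1 ≤ n)
    (hu0 : 0 < u) (hu1 : u ≤ 1) (hu'0 : 0 < u') (hu'1 : u' ≤ 1) (huu' : u ≤ u')
    (hl0 : 0 ≤ lam) (hl1 : lam < 1)
    (he : REq A B n u lam a b) (hmin : ∀ a₂ b₂, REq A B n u lam a₂ b₂ → a ≤ a₂ ∧ b ≤ b₂)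
    (he' : REq A B n u' lam a' b') (hmin' : ∀ a₂ b₂, REq A B n u' lam a₂ b₂ → a' ≤ a₂ ∧ b' ≤ b₂) :
    Pif A B n u lam a b ≤ Pif A B n u' lam a' b' := by
  rcases le_or_gt (Pif A B n u lam a b) 0 with hPi | hPi
  · exact hPi.trans (Pi_nonneg he')
  obtain ⟨ha0, ha1, hb0, hb1, hWL1, hWL0, hWH1, hWH0⟩ := he
  obtain ⟨ha'0, ha'1, hb'0, hb'1, hWL1', hWL0', hWH1', hWH0'⟩ := he'
  -- Step 1 : b = 1
  have hb : b = 1 := by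
    have hsum := Pi_decomp (A := A) (B := B) (n := n) (u := u) (lam := lam) (a := a) (b := b)
    have hor : 0 < a * WL A B n u lam a b ∨ 0 < b * WH A B n u lam a b := by
      by_contra h; push_neg at h; obtain ⟨h1, h2⟩ := h; linarith
    rcases hor with h | h
    · have hWLpos : 0 < WL A B n u lam a b := by nlinarith
      exact hWH1 (SL1 hA hB hn hu0 hu1 hl0 hl1 ha0 ha1 hb0 hb1 hWLpos.le)
    · have hWHpos : 0 < WH A B n u lam a b := by nlinarith
      exact hWH1 hWHpos
  subst hb
  -- Step 2 : key eq conditions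
  have key1 : a < 1 → mf A B n lam (u * (1 - a)) ≤ 0 := by
    intro halt
    have hWLle : WL A B n u lam a 1 ≤ 0 := by
      by_contra h; push_neg at h; exact absurd (hWL1 h) (ne_of_lt halt)
    rw [WL_at_one] at hWLle; nlinarith
  -- Step 3 : WH(u; 0, x) > 0 on [0,1)
  have hw0 : 0 < WH A B n u lam 0 0 := by
    by_contra h; push_neg at h
    have hWLneg := SL2 hA hB hn hu0 hu1 hl0 hl1 (le_refl 0) zero_le_one (le_refl 0) zero_le_one h
    have hre : REq A B n u lam 0 0 :=
      ⟨le_refl 0, zero_le_one, le_refl 0, zero_le_one,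
       fun h' => absurd h' (by linarith), fun _ => rfl,
       fun h' => absurd h' (by linarith), fun _ => rfl⟩
    have := (hmin 0 0 hre).2; linarith
  have hnozero : ∀ x, 0 < x → x < 1 → WH A B n u lam 0 x ≠ 0 := by
    intro x hx0 hx1 h0
    have hWLneg := SL2 hA hB hn hu0 hu1 hl0 hl1 (le_refl 0) zero_le_one hx0.le hx1.le h0.le
    have hre : REq A B n u lam 0 x :=
      ⟨le_refl 0, zero_le_one, hx0.le, hx1.le,
       fun h' => absurd h' (by linarith), fun _ => rfl,
       fun h' => absurd h' (by rw [h0]; exact lt_irrefl 0), fun h' => absurd h' (by rw [h0]; exact lt_irrefl 0)⟩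
    have := (hmin 0 x hre).2; linarith
  have hstep3 : ∀ x, 0 ≤ x → x < 1 → 0 < WH A B n u lam 0 x := by
    intro x hx0 hx1
    rcases eq_or_lt_of_le hx0 with rfl | hx0'
    · exact hw0
    by_contra h; push_neg at h
    rcases eq_or_lt_of_le h with h' | h'
    · exact hnozero x hx0' hx1 h'
    · have hsub := intermediate_value_Icc' hx0'.le (WH_cont (A := A) (B := B) (n := n) (u := u) (lam := lam)).continuousOn
      have h0mem : (0:ℝ) ∈ Set.Icc (WH A B n u lam 0 x) (WH A B n u lam 0 0) := ⟨h'.le, hw0.le⟩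
      obtain ⟨x₀, hx₀mem, hx₀⟩ := hsub h0mem
      rcases eq_or_lt_of_le hx₀mem.1 with h00 | h00
      · rw [← h00] at hx₀; linarith
      · exact hnozero x₀ h00 (lt_of_le_of_lt hx₀mem.2 hx1) hx₀
  -- Step 4 : WH(u'; 0, x) > 0 on [0,1)
  have hstep4 : ∀ x, 0 ≤ x → x < 1 → 0 < WH A B n u' lam 0 x := by
    intro x hx0 hx1
    rcases eq_or_lt_of_le hx0 with rfl | hx0'
    · -- x = 0
      rw [WH_at_00]
      rw [WH_at_00] at hw0
      have hnR : (0:ℝ) < (n:ℝ) := by exact_mod_cast Nat.lt_of_lt_of_le Nat.zero_lt_one hn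
      have hLu : 0 < A * (1 - lam * u) - B * (1 - u) := by nlinarith
      have hLu' : 0 < A * (1 - lam * u') - B * (1 - u') := by
        rcases le_or_gt (A * lam) B with hc | hc
        · nlinarith [mul_nonneg (sub_nonneg.mpr huu') (sub_nonneg.mpr hc)]
        · have h1 : u' * (A * lam - B) ≤ 1 * (A * lam - B) :=
            mul_le_mul_of_nonneg_right hu'1 (by linarith)
          have h2 : 0 < A * (1 - lam) := mul_pos hA (by linarith)
          nlinarith
      nlinarith [mul_pos hLu' hnR]
    · rcases eq_or_lt_of_le hu'1 with h1 | h1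
      · -- u' = 1
        subst h1
        have hr := rH_mem (le_of_lt hu'0) (le_refl 1) hl0 hl1.le (le_refl 0) zero_le_one hx0 hx1.le
        have hG1 : 1 ≤ G n (rHf 1 lam 0 x) := G_ge_one hn hr.1
        unfold WH
        have hGl : 0 ≤ G n (rLf 1 0 x) := by
          apply G_nonneg; exact (rL_mem (le_of_lt hu'0) (le_refl 1) (le_refl 0) zero_le_one hx0 hx1.le).1
        nlinarith [mul_pos (mul_pos hA (by linarith : (0:ℝ) < 1 - lam))
          (lt_of_lt_of_le one_pos hG1)]
      · -- u' < 1 hence u < 1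
        have hu1' : u < 1 := lt_of_le_of_lt huu' h1
        have h1u : (0:ℝ) < 1 - u := by linarith
        have h1u' : (0:ℝ) < 1 - u' := by linarith
        obtain ⟨y, hy⟩ : ∃ y : ℝ, y = x * (1 - u') / (1 - u) := ⟨_, rfl⟩
        have ey : (1 - u) * y = (1 - u') * x := by rw [hy]; field_simp
        have hy0 : 0 < y := by nlinarith [mul_pos h1u' hx0']
        have hyx : y ≤ x := by nlinarith
        have hy1 : y < 1 := lt_of_le_of_lt hyx hx1
        have erL : rLf u' 0 x = rLf u 0 y := by unfold rLf; linarith [ey]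
        have erH : rHf u' lam 0 x ≤ rHf u lam 0 y := by
          unfold rHf
          have hkey : (1 - lam * u) * ((1 - u') * x) ≤ (1 - lam * u') * ((1 - u) * x) := by
            nlinarith [mul_nonneg (mul_nonneg hx0 (by linarith : (0:ℝ) ≤ 1 - lam))
              (by linarith : (0:ℝ) ≤ u' - u)]
          have h3 : (1 - lam * u) * ((1 - u) * y) = (1 - lam * u) * ((1 - u') * x) := by rw [ey]
          nlinarith [h3, hkey]
        have hrmem' := rH_mem (le_of_lt hu'0) hu'1 hl0 hl1.le (le_refl 0) zero_le_one hx0 hx1.le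
        have hpow : (rHf u' lam 0 x) ^ n ≤ (rHf u lam 0 y) ^ n :=
          pow_le_pow_left₀ hrmem'.1 erH n
        have hPicomp : Pif A B n u lam 0 y ≤ Pif A B n u' lam 0 x := by
          unfold Pif; rw [erL]; nlinarith
        have hPiy : 0 < Pif A B n u lam 0 y := by
          have := hstep3 y hy0.le hy1
          have hd := Pi_decomp (A := A) (B := B) (n := n) (u := u) (lam := lam) (a := 0) (b := y)
          nlinarith
        have hd' := Pi_decomp (A := A) (B := B) (n := n) (u := u') (lam := lam) (a := 0) (b := x)
        nlinarith
  -- Step 5 : b' = 1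
  have hb' : b' = 1 := by
    by_contra hb'ne
    have hb'lt : b' < 1 := lt_of_le_of_ne hb'1 hb'ne
    have hWH'le : WH A B n u' lam a' b' ≤ 0 := by
      by_contra h; push_neg at h; exact hb'ne (hWH1' h)
    have hWL' := SL2 hA hB hn hu'0 hu'1 hl0 hl1 ha'0 ha'1 hb'0 hb'1 hWH'le
    have ha' : a' = 0 := hWL0' hWL'
    rw [ha'] at hWH'le
    exact absurd (hstep4 b' hb'0 hb'lt) (not_lt.mpr hWH'le)
  subst hb'
  have key1' : a' < 1 → mf A B n lam (u' * (1 - a')) ≤ 0 := by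
    intro halt
    have hWLle : WL A B n u' lam a' 1 ≤ 0 := by
      by_contra h; push_neg at h; exact absurd (hWL1' h) (ne_of_lt halt)
    rw [WL_at_one] at hWLle; nlinarith
  -- final comparison
  rw [Pi_at_one, Pi_at_one]
  have hvh0 : 0 ≤ u * (1 - a) := mul_nonneg hu0.le (by linarith)
  have hvh'0 : 0 ≤ u' * (1 - a') := mul_nonneg hu'0.le (by linarith)
  rcases eq_or_lt_of_le ha1 with haeq | halt
  · -- a = 1, v̂ = 0
    have e1 : u * (1 - a) = 0 := by rw [haeq]; ring
    rcases eq_or_lt_of_le ha'1 with ha'eq | ha'lt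
    · have e2 : u' * (1 - a') = 0 := by rw [ha'eq]; ring
      rw [e1, e2]
    · have hm' := key1' ha'lt
      have hx := mf_nonpos_bound hA hn hl0 hl1.le hvh'0 hm'
      rw [e1]
      exact Phif_mono hx (le_refl 0) hvh'0
  · -- a < 1
    have hm := key1 halt
    have hBa : A * lam ^ n ≤ B := mf_nonpos_bound hA hn hl0 hl1.le hvh0 hm
    have hvhu : u * (1 - a) ≤ u := by nlinarith
    suffices hvv : u * (1 - a) ≤ u' * (1 - a') by exact Phif_mono hBa hvh0 hvv
    by_contra hvv; push_neg at hvv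
    have ha'pos : 0 < a' := by
      rcases eq_or_lt_of_le ha'0 with h | h
      · exfalso; rw [← h] at hvv; nlinarith
      · exact h
    have hPhiPos : 0 < Phif A B n lam (u * (1 - a)) := by
      rw [← Pi_at_one (A := A) (B := B) (n := n) (u := u) (lam := lam) (a := a)]; exact hPi
    by_cases hmu' : mf A B n lam u' ≤ 0
    · -- (0,1) is an equilibrium for u'
      have hWL01 : WL A B n u' lam 0 1 = u' * mf A B n lam u' := by
        rw [WL_at_one, show u' * (1 - (0:ℝ)) = u' by ring]
      have hWH01 : 0 < WH A B n u' lam 0 1 := by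
        rw [WH_at_01]
        have h2 : Phif A B n lam (u * (1 - a)) ≤ Phif A B n lam u' :=
          Phif_mono hBa hvh0 (by nlinarith)
        linarith
      have hre : REq A B n u' lam 0 1 :=
        ⟨le_refl 0, zero_le_one, zero_le_one, le_refl 1,
         fun h => absurd h (by rw [hWL01]; nlinarith), fun _ => rfl,
         fun _ => rfl, fun h => absurd h (by linarith)⟩
      have := (hmin' 0 1 hre).1
      linarith
    · push_neg at hmu'
      have hvhu' : u * (1 - a) ≤ u' := by nlinarith
      have hvhltu' : u * (1 - a) < u' := by
        rcases eq_or_lt_of_le hvhu' with e | e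
        · exfalso; rw [e] at hm; linarith
        · exact e
      obtain ⟨vs, hmem, hvs⟩ := intermediate_value_Icc hvhu' mf_cont.continuousOn ⟨hm, hmu'.le⟩
      have hvsu' : vs < u' := by
        rcases eq_or_lt_of_le hmem.2 with e | e
        · exfalso; rw [e] at hvs; linarith
        · exact e
      have hvs0 : 0 < vs := by nlinarith [hmem.1]
      obtain ⟨astar, hastar⟩ : ∃ t : ℝ, t = 1 - vs / u' := ⟨_, rfl⟩
      have hdiv1 : vs / u' < 1 := (div_lt_one hu'0).mpr hvsu'
      have hdiv0 : 0 < vs / u' := div_pos hvs0 hu'0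
      have hastar0 : 0 < astar := by rw [hastar]; linarith
      have hastar1 : astar ≤ 1 := by rw [hastar]; linarith
      have estar : u' * (1 - astar) = vs := by rw [hastar]; field_simp; ring
      have hWLeq : WL A B n u' lam astar 1 = 0 := by
        rw [WL_at_one, estar, hvs]; ring
      have hWHstar : 0 < WH A B n u' lam astar 1 :=
        SL1 hA hB hn hu'0 hu'1 hl0 hl1 hastar0.le hastar1 zero_le_one (le_refl 1)
          (by rw [hWLeq])
      have hre : REq A B n u' lam astar 1 :=
        ⟨hastar0.le, hastar1, zero_le_one, le_refl 1,
         fun h => absurd h (by rw [hWLeq]; exact lt_irrefl 0),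
         fun h => absurd h (by rw [hWLeq]; exact lt_irrefl 0),
         fun _ => rfl, fun h => absurd h (by linarith)⟩
      have hle := (hmin' astar 1 hre).1
      have : vs ≤ u' * (1 - a') := by
        rw [← estar]; nlinarith
      linarith [hmem.1]

set_option maxHeartbeats 1000000 in
theorem R_LEAST {A B : ℝ} {n : ℕ} {u u' lam a b a' b' : ℝ}
    (hA : 0 < A) (hB : 0 < B) (hn : 1 ≤ n)
    (hu0 : 0 < u) (hu1 : u ≤ 1) (hu'0 : 0 < u') (hu'1 : u' ≤ 1) (huu' : u ≤ u')
    (hl0 : 0 ≤ lam) (hl1 : lam < 1)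
    (he : REq A B n u lam a b) (hmax : ∀ a₂ b₂, REq A B n u lam a₂ b₂ → a₂ ≤ a ∧ b₂ ≤ b)
    (he' : REq A B n u' lam a' b') (hmax' : ∀ a₂ b₂, REq A B n u' lam a₂ b₂ → a₂ ≤ a' ∧ b₂ ≤ b') :
    Pif A B n u lam a b ≤ Pif A B n u' lam a' b' := by
  have hePi := Pi_nonneg he'
  obtain ⟨ha0, ha1, hb0, hb1, hWL1, hWL0, hWH1, hWH0⟩ := he
  obtain ⟨ha'0, ha'1, hb'0, hb'1, hWL1', hWL0', hWH1', hWH0'⟩ := he'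
  rcases le_or_gt B (A * lam) with hc | hc
  · -- (1,1) is an equilibrium of both
    have heq11 : ∀ v : ℝ, 0 < v → v ≤ 1 → REq A B n v lam 1 1 := by
      intro v hv0 hv1
      have e1 : rHf v lam 1 1 = 0 := by unfold rHf; ring
      have e2 : rLf v 1 1 = 0 := by unfold rLf; ring
      have hWLv : 0 ≤ WL A B n v lam 1 1 := by
        unfold WL; rw [e1, e2, G_zero hn]; nlinarith
      have hWHv : 0 < WH A B n v lam 1 1 := by
        unfold WH; rw [e1, e2, G_zero hn]; nlinarith
      exact ⟨zero_le_one, le_refl 1, zero_le_one, le_refl 1,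
        fun _ => rfl, fun h => absurd h (by linarith), fun _ => rfl, fun h => absurd h (by linarith)⟩
    have h1 := hmax 1 1 (heq11 u hu0 hu1)
    have h2 := hmax' 1 1 (heq11 u' hu'0 hu'1)
    have ea : a = 1 := le_antisymm ha1 h1.1
    have eb : b = 1 := le_antisymm hb1 h1.2
    have ea' : a' = 1 := le_antisymm ha'1 h2.1
    have eb' : b' = 1 := le_antisymm hb'1 h2.2
    subst ea; subst eb; subst ea'; subst eb'
    rw [Pi_at_one, Pi_at_one]
    rw [show u * (1 - 1) = 0 by ring, show u' * (1 - 1) = 0 by ring]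
  · -- A·λ < B : every equilibrium has σ(0) = 0
    have hmneg : ∀ v : ℝ, 0 ≤ v → mf A B n lam v < 0 := fun v hv =>
      mf_neg hA hn hl0 hl1.le hc hv
    have ha : a = 0 := by
      by_contra h
      have hapos : 0 < a := lt_of_le_of_ne ha0 (Ne.symm h)
      have hWLge : 0 ≤ WL A B n u lam a b := by
        by_contra h2; push_neg at h2; exact h (hWL0 h2)
      have hb1' : b = 1 := hWH1 (SL1 hA hB hn hu0 hu1 hl0 hl1 ha0 ha1 hb0 hb1 hWLge)
      subst hb1'
      rw [WL_at_one] at hWLge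
      have := hmneg (u * (1 - a)) (mul_nonneg hu0.le (by linarith))
      nlinarith
    have ha' : a' = 0 := by
      by_contra h
      have hapos : 0 < a' := lt_of_le_of_ne ha'0 (Ne.symm h)
      have hWLge : 0 ≤ WL A B n u' lam a' b' := by
        by_contra h2; push_neg at h2; exact h (hWL0' h2)
      have hb1' : b' = 1 := hWH1' (SL1 hA hB hn hu'0 hu'1 hl0 hl1 ha'0 ha'1 hb'0 hb'1 hWLge)
      subst hb1'
      rw [WL_at_one] at hWLge
      have := hmneg (u' * (1 - a')) (mul_nonneg hu'0.le (by linarith))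
      nlinarith
    subst ha; subst ha'
    rcases eq_or_lt_of_le hb1 with hbeq | hblt
    · -- b = 1 : σ̌ = (0,1), show σ̌' = (0,1) as well
      subst hbeq
      have hBn : A * lam ^ n ≤ B := by
        have hl : lam ^ n ≤ lam := by
          calc lam ^ n ≤ lam ^ 1 := pow_le_pow_of_le_one hl0 hl1.le hn
            _ = lam := pow_one lam
        nlinarith
      have hPhi : Phif A B n lam u ≤ Phif A B n lam u' := Phif_mono hBn hu0.le huu'
      have hPiu : 0 ≤ Phif A B n lam u := by
        have := Pi_nonneg (A := A) (B := B) (n := n) (u := u) (lam := lam) (a := 0) (b := 1)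
          ⟨le_refl 0, zero_le_one, zero_le_one, le_refl 1, hWL1, hWL0, hWH1, hWH0⟩
        rw [Pi_at_one, show u * (1 - 0) = u by ring] at this
        exact this
      have hre' : REq A B n u' lam 0 1 := by
        have hWL01 : WL A B n u' lam 0 1 < 0 := by
          rw [WL_at_one, show u' * (1 - (0:ℝ)) = u' by ring]
          nlinarith [hmneg u' hu'0.le]
        have hWH01 : 0 ≤ WH A B n u' lam 0 1 := by rw [WH_at_01]; linarith
        exact ⟨le_refl 0, zero_le_one, zero_le_one, le_refl 1,
          fun h => absurd h (by linarith), fun _ => rfl,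
          fun _ => rfl, fun h => absurd h (by linarith)⟩
      have hb'eq : b' = 1 := le_antisymm hb'1 (hmax' 0 1 hre').2
      subst hb'eq
      rw [Pi_at_one, Pi_at_one, show u * (1 - 0) = u by ring, show u' * (1 - 0) = u' by ring]
      exact hPhi
    · -- b < 1 : surplus of E is ≤ 0
      have hWHle : WH A B n u lam 0 b ≤ 0 := by
        by_contra h; push_neg at h; exact absurd (hWH1 h) (ne_of_lt hblt)
      have hPile : Pif A B n u lam 0 b ≤ 0 := by
        have hd := Pi_decomp (A := A) (B := B) (n := n) (u := u) (lam := lam) (a := 0) (b := b)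
        nlinarith
      linarith

theorem R_DEG {A B : ℝ} {n : ℕ} {u u' lam a b a' b' : ℝ}
    (hA : 0 < A) (hB : 0 < B) (hn : 1 ≤ n)
    (hu0 : 0 < u) (hu1 : u ≤ 1) (hu'0 : 0 < u') (hu'1 : u' ≤ 1)
    (hl1 : lam = 1)
    (he : REq A B n u lam a b) (he' : REq A B n u' lam a' b') :
    Pif A B n u lam a b = Pif A B n u' lam a' b' := by
  subst hl1
  -- with λ = 1, rHf = rLf and everything collapses
  have hkey : ∀ v av bv : ℝ, 0 < v → v ≤ 1 → REq A B n v 1 av bv →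
      Pif A B n v 1 av bv = (A - B) * (1 - (rLf v av bv) ^ n) ∧
      (A ≠ B → rLf v av bv = if A < B then 1 else 0) := by
    intro v av bv hv0 hv1 hre
    obtain ⟨hav0, hav1, hbv0, hbv1, hWL1, hWL0, hWH1, hWH0⟩ := hre
    have erH : rHf v 1 av bv = rLf v av bv := by unfold rHf rLf; ring
    have hrmem := rL_mem hv0.le hv1 hav0 hav1 hbv0 hbv1
    have hG1 : 1 ≤ G n (rLf v av bv) := G_ge_one hn hrmem.1
    have eWL : WL A B n v 1 av bv = v * G n (rLf v av bv) * (A - B) := by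
      unfold WL; rw [erH]; ring
    have eWH : WH A B n v 1 av bv = (1 - v) * G n (rLf v av bv) * (A - B) := by
      unfold WH; rw [erH]; ring
    constructor
    · unfold Pif; rw [erH]; ring
    · intro hAB
      rcases lt_or_gt_of_ne hAB with h | h
      · -- A < B : a = 0 and (b = 0 or v = 1) so r = 1
        rw [if_pos h]
        have hav : av = 0 := by
          apply hWL0; rw [eWL]
          nlinarith [mul_pos hv0 (lt_of_lt_of_le one_pos hG1)]
        rcases eq_or_lt_of_le hv1 with hv | hv
        · subst hv; unfold rLf; rw [hav]; ring
        · have hbv : bv = 0 := by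
            apply hWH0; rw [eWH]
            nlinarith [mul_pos (show (0:ℝ) < 1 - v by linarith) (lt_of_lt_of_le one_pos hG1)]
          unfold rLf; rw [hav, hbv]; ring
      · -- B < A : a = 1 and (b = 1 or v = 1) so r = 0
        rw [if_neg (by linarith)]
        have hav : av = 1 := by
          apply hWL1; rw [eWL]
          nlinarith [mul_pos hv0 (lt_of_lt_of_le one_pos hG1)]
        rcases eq_or_lt_of_le hv1 with hv | hv
        · subst hv; unfold rLf; rw [hav]; ring
        · have hbv : bv = 1 := by
            apply hWH1; rw [eWH]
            nlinarith [mul_pos (show (0:ℝ) < 1 - v by linarith) (lt_of_lt_of_le one_pos hG1)]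
          unfold rLf; rw [hav, hbv]; ring
  obtain ⟨hP1, hr1⟩ := hkey u a b hu0 hu1 he
  obtain ⟨hP2, hr2⟩ := hkey u' a' b' hu'0 hu'1 he'
  rw [hP1, hP2]
  rcases eq_or_ne A B with hAB | hAB
  · rw [hAB]; ring
  · rw [hr1 hAB, hr2 hAB]

/-- rejection probability bounds -/
lemma rej_mem {p σ : Fin 2 → ℝ} (hp0 : ∀ s, 0 ≤ p s) (hp1 : ∑ s, p s = 1)
    (hσ : IsStrategy σ) : 0 ≤ rej p σ ∧ rej p σ ≤ 1 := by
  unfold rej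
  rw [Fin.sum_univ_two] at *
  have h0 := hp0 0; have h1 := hp0 1
  have hs0 := hσ 0; have hs1 := hσ 1
  constructor
  · nlinarith [mul_le_mul_of_nonneg_left hs0.2 h0, mul_le_mul_of_nonneg_left hs1.2 h1]
  · nlinarith [mul_nonneg h0 hs0.1, mul_nonneg h1 hs1.1]

lemma visit_eq {n : ℕ} {p σ : Fin 2 → ℝ} : visit n p σ = (1 / (n:ℝ)) * G n (rej p σ) := rfl

set_option maxHeartbeats 1000000 in
/-- the main translation: posterior conditions are equivalent to W-sign conditions -/
lemma post_iff {ρ c : ℝ} (hρ : ρ ∈ Set.Ioo (0:ℝ) 1) (hc : c ∈ Set.Ioo (0:ℝ) 1)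
    {n : ℕ} (hn : 1 ≤ n) {pL pH σ : Fin 2 → ℝ} (hE : IsExperiment pL pH)
    (hσ : IsStrategy σ) (s : Fin 2) :
    (c < post (interim ρ n pL pH σ) pL pH s ↔
      c * (1 - ρ) * (pL s * G n (rej pL σ)) < (1 - c) * ρ * (pH s * G n (rej pH σ))) ∧
    (post (interim ρ n pL pH σ) pL pH s < c ↔
      (1 - c) * ρ * (pH s * G n (rej pH σ)) < c * (1 - ρ) * (pL s * G n (rej pL σ))) := by
  obtain ⟨hρ0, hρ1⟩ := hρ
  obtain ⟨hc0, hc1⟩ := hc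
  obtain ⟨hL0, hH0, hLs, hHs, hsupp, _⟩ := hE
  have hrL := rej_mem hL0 hLs hσ
  have hrH := rej_mem hH0 hHs hσ
  set gL := G n (rej pL σ) with hgLd
  set gH := G n (rej pH σ) with hgHd
  have hgL : 1 ≤ gL := G_ge_one hn hrL.1
  have hgH : 1 ≤ gH := G_ge_one hn hrH.1
  have hn0 : (0:ℝ) < (n:ℝ) := by exact_mod_cast Nat.lt_of_lt_of_le Nat.zero_lt_one hn
  set x := ρ * gH with hxd
  set y := (1 - ρ) * gL with hyd
  have hx : 0 < x := by rw [hxd]; nlinarith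
  have hy : 0 < y := by rw [hyd]; nlinarith
  have hxy : 0 < x + y := by linarith
  have hinterim : interim ρ n pL pH σ = x / (x + y) := by
    unfold interim
    rw [visit_eq, visit_eq, ← hgLd, ← hgHd]
    rw [show ρ * (1 / (n:ℝ) * gH) = x * (1 / (n:ℝ)) by rw [hxd]; ring,
        show (1 - ρ) * (1 / (n:ℝ) * gL) = y * (1 / (n:ℝ)) by rw [hyd]; ring,
        ← add_mul]
    rw [mul_div_mul_right _ _ (by positivity : (1 / (n:ℝ)) ≠ 0)]
  set N := x * pH s with hNd
  set M := y * pL s with hMd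
  have hNM : 0 < N + M := by
    have hs := hsupp s
    rcases lt_or_ge 0 (pH s) with h | h
    · have : 0 < N := mul_pos hx h
      have : 0 ≤ M := mul_nonneg hy.le (hL0 s)
      linarith
    · have hpHs : pH s = 0 := le_antisymm h (hH0 s)
      have hpLs : 0 < pL s := by nlinarith
      have : 0 < M := mul_pos hy hpLs
      have : N = 0 := by rw [hNd, hpHs]; ring
      linarith
  have hpost : post (interim ρ n pL pH σ) pL pH s = N / (N + M) := by
    rw [hinterim]
    unfold post
    have h1ψ : 1 - x / (x + y) = y / (x + y) := by field_simp; ring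
    rw [h1ψ, div_mul_eq_mul_div, div_mul_eq_mul_div, ← add_div, ← hNd, ← hMd]
    rw [div_div_div_cancel_right₀ (by positivity : x + y ≠ 0)]
  rw [hpost]
  have eA : (1 - c) * ρ * (pH s * gH) = (1 - c) * N := by rw [hNd, hxd]; ring
  have eB : c * (1 - ρ) * (pL s * gL) = c * M := by rw [hMd, hyd]; ring
  constructor
  · rw [lt_div_iff₀ hNM]
    constructor <;> intro h <;> nlinarith
  · rw [div_lt_iff₀ hNM]
    constructor <;> intro h <;> nlinarith

/-- basic facts about a binary experiment -/
lemma exp_facts {pL pH : Fin 2 → ℝ} (hE : IsExperiment pL pH) :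
    pL 1 = 1 - pL 0 ∧ pH 1 = 1 - pH 0 ∧ 0 < pL 0 ∧ pL 0 ≤ 1 ∧ pH 0 ≤ pL 0 := by
  obtain ⟨hL0, hH0, hLs, hHs, hsupp, hml⟩ := hE
  rw [Fin.sum_univ_two] at hLs hHs
  have hml01 := hml 0 1 (by decide)
  have h1 : pL 1 = 1 - pL 0 := by linarith
  have h2 : pH 1 = 1 - pH 0 := by linarith
  have h3 : pH 0 ≤ pL 0 := by nlinarith [hL0 0, hL0 1, hH0 0, hH0 1]
  have h4 : 0 < pL 0 := by
    have := hsupp 0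
    rcases lt_or_ge 0 (pL 0) with h | h
    · exact h
    · exfalso; nlinarith [hH0 0, hL0 0]
  exact ⟨h1, h2, h4, by linarith [hL0 1], h3⟩

/-- equilibrium ↔ reduced equilibrium -/
lemma bridge {ρ c : ℝ} (hρ : ρ ∈ Set.Ioo (0:ℝ) 1) (hc : c ∈ Set.Ioo (0:ℝ) 1)
    {n : ℕ} (hn : 1 ≤ n) {pL pH : Fin 2 → ℝ} (hE : IsExperiment pL pH)
    {lam : ℝ} (hlam : pH 0 = lam * pL 0) (σ : Fin 2 → ℝ) :
    IsEquilibrium ρ c n pL pH σ ↔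
      REq ((1 - c) * ρ) (c * (1 - ρ)) n (pL 0) lam (σ 0) (σ 1) := by
  obtain ⟨hpL1, hpH1, hu0, hu1, hml⟩ := exp_facts hE
  have hrejL : ∀ τ : Fin 2 → ℝ, rej pL τ = rLf (pL 0) (τ 0) (τ 1) := by
    intro τ; unfold rej rLf; rw [Fin.sum_univ_two, hpL1]
  have hrejH : ∀ τ : Fin 2 → ℝ, rej pH τ = rHf (pL 0) lam (τ 0) (τ 1) := by
    intro τ; unfold rej rHf; rw [Fin.sum_univ_two, hpH1, hlam]
  have eWL : WL ((1 - c) * ρ) (c * (1 - ρ)) n (pL 0) lam (σ 0) (σ 1) =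
      (1 - c) * ρ * (pH 0 * G n (rej pH σ)) - c * (1 - ρ) * (pL 0 * G n (rej pL σ)) := by
    unfold WL; rw [hrejH σ, hrejL σ, hlam]; ring
  have eWH : WH ((1 - c) * ρ) (c * (1 - ρ)) n (pL 0) lam (σ 0) (σ 1) =
      (1 - c) * ρ * (pH 1 * G n (rej pH σ)) - c * (1 - ρ) * (pL 1 * G n (rej pL σ)) := by
    unfold WH; rw [hrejH σ, hrejL σ, hpH1, hpL1, hlam]; ring
  constructor
  · rintro ⟨hσ, hcond⟩
    have hp0 := post_iff hρ hc hn hE hσ 0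
    have hp1 := post_iff hρ hc hn hE hσ 1
    obtain ⟨h00, h01⟩ := hσ 0
    obtain ⟨h10, h11⟩ := hσ 1
    refine ⟨h00, h01, h10, h11, ?_, ?_, ?_, ?_⟩
    · intro h; exact (hcond 0).1 (hp0.1.mpr (by linarith [eWL]))
    · intro h; exact (hcond 0).2 (hp0.2.mpr (by linarith [eWL]))
    · intro h; exact (hcond 1).1 (hp1.1.mpr (by linarith [eWH]))
    · intro h; exact (hcond 1).2 (hp1.2.mpr (by linarith [eWH]))
  · rintro ⟨h00, h01, h10, h11, hc0, hc1, hc2, hc3⟩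
    have hσ : IsStrategy σ := by
      intro s; fin_cases s
      · exact ⟨h00, h01⟩
      · exact ⟨h10, h11⟩
    refine ⟨hσ, ?_⟩
    intro s; fin_cases s
    · have hp0 := post_iff hρ hc hn hE hσ 0
      constructor
      · intro h; exact hc0 (by linarith [eWL, hp0.1.mp h])
      · intro h; exact hc1 (by linarith [eWL, hp0.2.mp h])
    · have hp1 := post_iff hρ hc hn hE hσ 1
      constructor
      · intro h; exact hc2 (by linarith [eWH, hp1.1.mp h])
      · intro h; exact hc3 (by linarith [eWH, hp1.2.mp h])

/-- surplus ↔ reduced surplus -/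
lemma surplus_eq {ρ c : ℝ} {n : ℕ} {pL pH : Fin 2 → ℝ} (hE : IsExperiment pL pH)
    {lam : ℝ} (hlam : pH 0 = lam * pL 0) (σ : Fin 2 → ℝ) :
    surplus ρ c n pL pH σ = Pif ((1 - c) * ρ) (c * (1 - ρ)) n (pL 0) lam (σ 0) (σ 1) := by
  obtain ⟨hpL1, hpH1, hu0, hu1, hml⟩ := exp_facts hE
  have hrejL : rej pL σ = rLf (pL 0) (σ 0) (σ 1) := by
    unfold rej rLf; rw [Fin.sum_univ_two, hpL1]
  have hrejH : rej pH σ = rHf (pL 0) lam (σ 0) (σ 1) := by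
    unfold rej rHf; rw [Fin.sum_univ_two, hpH1, hlam]
  unfold surplus Pif
  rw [hrejL, hrejH]

end SGN

/-- stronger good news raises surplus. For binary experiments (outcome `0`
is the low signal `l`, outcome `1` the high signal `h`) with the same bad-news
likelihood ratio and weakly stronger good news under `E' = (qL, qH)`, total surplus in
the most (resp. least) selective equilibrium under `E'` weakly exceeds that under
`E = (pL, pH)`. -/


theorem stronger_good_news_raises_surplus
    (ρ c : ℝ) (hρ : ρ ∈ Set.Ioo (0:ℝ) 1) (hc : c ∈ Set.Ioo (0:ℝ) 1)
    (n : ℕ) (hn : 1 ≤ n)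
    (pL pH qL qH : Fin 2 → ℝ)
    (hE : IsExperiment pL pH) (hE' : IsExperiment qL qH)
    (hbad_eq : qH 0 * pL 0 = pH 0 * qL 0)
    (hgood : pH 1 * qL 1 ≤ qH 1 * pL 1) :
    (∀ σhat σhat' : Fin 2 → ℝ, MostSelective ρ c n pL pH σhat →
      MostSelective ρ c n qL qH σhat' →
      surplus ρ c n pL pH σhat ≤ surplus ρ c n qL qH σhat') ∧
    (∀ σcheck σcheck' : Fin 2 → ℝ, LeastSelective ρ c n pL pH σcheck →
      LeastSelective ρ c n qL qH σcheck' →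
      surplus ρ c n pL pH σcheck ≤ surplus ρ c n qL qH σcheck') := by
  have hc' := hc
  have hρ' := hρ
  obtain ⟨hρ0, hρ1⟩ := hρ'
  obtain ⟨hc0, hc1⟩ := hc'
  have hA : 0 < (1 - c) * ρ := by nlinarith
  have hB : 0 < c * (1 - ρ) := by nlinarith
  obtain ⟨hpL1, hpH1, hu0, hu1, hml⟩ := SGN.exp_facts hE
  obtain ⟨hqL1, hqH1, hu'0, hu'1, hml'⟩ := SGN.exp_facts hE'
  set lam := pH 0 / pL 0 with hlamdef
  have hlam : pH 0 = lam * pL 0 := by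
    rw [hlamdef, div_mul_cancel₀ _ hu0.ne']
  have hlam0 : 0 ≤ lam := div_nonneg (hE.2.1 0) hu0.le
  have hlam1 : lam ≤ 1 := (div_le_one hu0).mpr hml
  have hqlam : qH 0 = lam * qL 0 := by
    apply mul_right_cancel₀ hu0.ne'
    rw [hbad_eq, hlam]; ring
  have huu' : lam < 1 → pL 0 ≤ qL 0 := by
    intro hlt
    rw [hpH1, hqH1, hpL1, hqL1, hlam, hqlam] at hgood
    nlinarith [hgood]
  constructor
  · intro σh σh' h1 h2
    obtain ⟨heq1, hmin1⟩ := h1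
    obtain ⟨heq2, hmin2⟩ := h2
    have hre1 := (SGN.bridge hρ hc hn hE hlam σh).mp heq1
    have hre2 := (SGN.bridge hρ hc hn hE' hqlam σh').mp heq2
    have hmin1' : ∀ a₂ b₂, SGN.REq ((1-c)*ρ) (c*(1-ρ)) n (pL 0) lam a₂ b₂ →
        σh 0 ≤ a₂ ∧ σh 1 ≤ b₂ := by
      intro a₂ b₂ hre
      have heq : IsEquilibrium ρ c n pL pH ![a₂, b₂] :=
        (SGN.bridge hρ hc hn hE hlam ![a₂, b₂]).mpr hre
      exact ⟨hmin1 _ heq 0, hmin1 _ heq 1⟩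
    have hmin2' : ∀ a₂ b₂, SGN.REq ((1-c)*ρ) (c*(1-ρ)) n (qL 0) lam a₂ b₂ →
        σh' 0 ≤ a₂ ∧ σh' 1 ≤ b₂ := by
      intro a₂ b₂ hre
      have heq : IsEquilibrium ρ c n qL qH ![a₂, b₂] :=
        (SGN.bridge hρ hc hn hE' hqlam ![a₂, b₂]).mpr hre
      exact ⟨hmin2 _ heq 0, hmin2 _ heq 1⟩
    rw [SGN.surplus_eq hE hlam σh, SGN.surplus_eq hE' hqlam σh']
    rcases eq_or_lt_of_le hlam1 with hdeg | hlt
    · exact le_of_eq (SGN.R_DEG hA hB hn hu0 hu1 hu'0 hu'1 hdeg hre1 hre2)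
    · exact SGN.R_MOST hA hB hn hu0 hu1 hu'0 hu'1 (huu' hlt) hlam0 hlt hre1 hmin1' hre2 hmin2'
  · intro σh σh' h1 h2
    obtain ⟨heq1, hmax1⟩ := h1
    obtain ⟨heq2, hmax2⟩ := h2
    have hre1 := (SGN.bridge hρ hc hn hE hlam σh).mp heq1
    have hre2 := (SGN.bridge hρ hc hn hE' hqlam σh').mp heq2
    have hmax1' : ∀ a₂ b₂, SGN.REq ((1-c)*ρ) (c*(1-ρ)) n (pL 0) lam a₂ b₂ →
        a₂ ≤ σh 0 ∧ b₂ ≤ σh 1 := by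
      intro a₂ b₂ hre
      have heq : IsEquilibrium ρ c n pL pH ![a₂, b₂] :=
        (SGN.bridge hρ hc hn hE hlam ![a₂, b₂]).mpr hre
      exact ⟨hmax1 _ heq 0, hmax1 _ heq 1⟩
    have hmax2' : ∀ a₂ b₂, SGN.REq ((1-c)*ρ) (c*(1-ρ)) n (qL 0) lam a₂ b₂ →
        a₂ ≤ σh' 0 ∧ b₂ ≤ σh' 1 := by
      intro a₂ b₂ hre
      have heq : IsEquilibrium ρ c n qL qH ![a₂, b₂] :=
        (SGN.bridge hρ hc hn hE' hqlam ![a₂, b₂]).mpr hre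
      exact ⟨hmax2 _ heq 0, hmax2 _ heq 1⟩
    rw [SGN.surplus_eq hE hlam σh, SGN.surplus_eq hE' hqlam σh']
    rcases eq_or_lt_of_le hlam1 with hdeg | hlt
    · exact le_of_eq (SGN.R_DEG hA hB hn hu0 hu1 hu'0 hu'1 hdeg hre1 hre2)
    · exact SGN.R_LEAST hA hB hn hu0 hu1 hu'0 hu'1 (huu' hlt) hlam0 hlt hre1 hmax1' hre2 hmax2'
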